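/- Fix n ∈ ℤ, n ≠ 0, and let A be the algebra of finitely supported functions ℤ → ℂ under pointwise product. If d̃ : A → ℓ^∞(ℤ) is linear and satisfies d̃(ab)(k) = d̃(a)(k)b(k) + a(k+n)d̃(b)(k), then there exists a function β : ℤ → ℂ such that d̃(a)(k) = β(k)·(a(k) - a(k+n)) for all a ∈ A and k ∈ ℤ. -/

import Mathlib

/-- for `n ≠ 0`, any linear map `d̃` on the algebra of finitely
supported functions `ℤ → ℂ` (pointwise product) into bounded functions
satisfying the twisted Leibniz rule `d̃(ab)(k) = d̃(a)(k)b(k) + a(k+n)d̃(b)(k)`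
is of the form `d̃(a)(k) = β(k)(a(k) - a(k+n))` for some `β : ℤ → ℂ`. -/
theorem twisted_derivation_classification (n : ℤ) (hn : n ≠ 0)
    (d : (ℤ →₀ ℂ) →ₗ[ℂ] (ℤ → ℂ))
    (hbd : ∀ a : ℤ →₀ ℂ, ∃ C : ℝ, ∀ k : ℤ, ‖d a k‖ ≤ C)
    (hleib : ∀ (a b : ℤ →₀ ℂ) (k : ℤ),
      d (a * b) k = d a k * b k + a (k + n) * d b k) :
    ∃ β : ℤ → ℂ, ∀ (a : ℤ →₀ ℂ) (k : ℤ), d a k = β k * (a k - a (k + n)) := by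
  classical
  refine ⟨fun k => d (Finsupp.single k 1) k, ?_⟩
  have key : ∀ m k : ℤ, d (Finsupp.single m (1:ℂ)) k =
      d (Finsupp.single k 1) k *
        ((Finsupp.single m (1:ℂ)) k - (Finsupp.single m (1:ℂ)) (k + n)) := by
    intro m k
    have hs : Finsupp.single m (1:ℂ) * Finsupp.single m 1 = Finsupp.single m 1 := by
      ext j
      rw [Finsupp.mul_apply]
      by_cases h : m = j <;> simp [Finsupp.single_apply, h]
    by_cases hkm : k = m
    · subst hkm
      have h1 : (Finsupp.single k (1:ℂ)) (k + n) = 0 := by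
        rw [Finsupp.single_apply]
        simp [hn, (by omega : k ≠ k + n)]
      simp [h1, hn]
    · by_cases hkn : k + n = m
      · have hmk : m ≠ k := fun h => hkm h.symm
        have hprod : Finsupp.single m (1:ℂ) * Finsupp.single k 1 = 0 := by
          ext j
          rw [Finsupp.mul_apply]
          by_cases h : m = j
          · subst h; simp [Finsupp.single_apply, hkm]
          · simp [Finsupp.single_apply, h]
        have h2 := hleib (Finsupp.single m 1) (Finsupp.single k 1) k
        rw [hprod, map_zero] at h2
        simp only [Pi.zero_apply, Finsupp.single_eq_same, hkn, mul_one, one_mul] at h2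
        have h3 : (Finsupp.single m (1:ℂ)) k = 0 := by
          rw [Finsupp.single_apply]; simp [hmk]
        rw [h3, hkn, Finsupp.single_eq_same]
        linear_combination -h2
      · have h2 := hleib (Finsupp.single m 1) (Finsupp.single m 1) k
        rw [hs] at h2
        have h3 : (Finsupp.single m (1:ℂ)) k = 0 := by
          rw [Finsupp.single_apply]; simp [Ne.symm hkm]
        have h4 : (Finsupp.single m (1:ℂ)) (k + n) = 0 := by
          rw [Finsupp.single_apply]; simp [Ne.symm hkn]
        rw [h3, h4] at h2 ⊢
        simpa using h2
  intro a k
  induction a using Finsupp.induction_linear with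
  | zero => simp
  | add f g hf hg => simp only [map_add, Pi.add_apply, Finsupp.add_apply, hf, hg]; ring
  | single m c =>
    have hc : Finsupp.single m c = c • Finsupp.single m (1:ℂ) := by
      rw [Finsupp.smul_single, smul_eq_mul, mul_one]
    rw [hc, map_smul]
    simp only [Pi.smul_apply, Finsupp.smul_apply, smul_eq_mul, key m k]
    ring
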